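/- Let Z, X, Y be square-integrable real random variables (or vectors), and let E_X, E_Y be the L²-optimal linear predictors of X and Y from Z (so that X - E_X Z and Y - E_Y Z are orthogonal to Z in L²). Define X_γ = X + (√γ - 1) E_X Z and Y_γ = Y + (√γ - 1) E_Y Z. Then for any linear map H, E‖Y_γ - H X_γ‖² = E‖(Y - E_Y Z) - H(X - E_X Z)‖² + γ E‖E_Y Z - H E_X Z‖². -/

import Mathlib

open MeasureTheory RealInnerProductSpace

private lemma integrable_inner_of_memL2 {Ω E : Type*} [MeasurableSpace Ω] {μ : Measure Ω}
    [NormedAddCommGroup E] [InnerProductSpace ℝ E] {f g : Ω → E}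
    (hf : MemLp f 2 μ) (hg : MemLp g 2 μ) :
    Integrable (fun ω => ⟪f ω, g ω⟫) μ := by
  have h := L2.integrable_inner (𝕜 := ℝ) (hf.toLp f) (hg.toLp g)
  refine h.congr ?_
  filter_upwards [hf.coeFn_toLp, hg.coeFn_toLp] with ω h1 h2
  rw [h1, h2]

private lemma integrable_norm_sq_of_memL2 {Ω E : Type*} [MeasurableSpace Ω] {μ : Measure Ω}
    [NormedAddCommGroup E] [InnerProductSpace ℝ E] {f : Ω → E}
    (hf : MemLp f 2 μ) : Integrable (fun ω => ‖f ω‖ ^ 2) μ := by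
  have h := integrable_inner_of_memL2 hf hf
  refine h.congr ?_
  filter_upwards with ω
  rw [real_inner_self_eq_norm_sq]

theorem stmt_5 {Ω HZ HX HY : Type*} [MeasurableSpace Ω]
    {μ : Measure Ω} [IsProbabilityMeasure μ]
    [NormedAddCommGroup HZ] [InnerProductSpace ℝ HZ] [CompleteSpace HZ]
    [NormedAddCommGroup HX] [InnerProductSpace ℝ HX] [CompleteSpace HX]
    [NormedAddCommGroup HY] [InnerProductSpace ℝ HY] [CompleteSpace HY]
    (Z : Ω → HZ) (X : Ω → HX) (Y : Ω → HY)
    (hZ : MemLp Z 2 μ) (hX : MemLp X 2 μ) (hY : MemLp Y 2 μ)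
    (EX : HZ →L[ℝ] HX) (EY : HZ →L[ℝ] HY)
    -- residuals are orthogonal in L² to every linear function of Z
    (hoX : ∀ A : HZ →L[ℝ] HX, ∫ ω, ⟪X ω - EX (Z ω), A (Z ω)⟫ ∂μ = 0)
    (hoY : ∀ A : HZ →L[ℝ] HY, ∫ ω, ⟪Y ω - EY (Z ω), A (Z ω)⟫ ∂μ = 0)
    (γ : ℝ) (hγ : 0 ≤ γ) (H : HX →L[ℝ] HY)
    (Xγ : Ω → HX) (Yγ : Ω → HY)
    (hXγ : ∀ ω, Xγ ω = X ω + (Real.sqrt γ - 1) • EX (Z ω))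
    (hYγ : ∀ ω, Yγ ω = Y ω + (Real.sqrt γ - 1) • EY (Z ω)) :
    ∫ ω, ‖Yγ ω - H (Xγ ω)‖ ^ 2 ∂μ =
      ∫ ω, ‖(Y ω - EY (Z ω)) - H (X ω - EX (Z ω))‖ ^ 2 ∂μ +
        γ * ∫ ω, ‖EY (Z ω) - H (EX (Z ω))‖ ^ 2 ∂μ := by
  set c := Real.sqrt γ with hc
  set A : HZ →L[ℝ] HY := EY - H.comp EX with hA
  set R : Ω → HY := fun ω => (Y ω - EY (Z ω)) - H (X ω - EX (Z ω)) with hR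
  set S : Ω → HY := fun ω => EY (Z ω) - H (EX (Z ω)) with hS
  have hSA : ∀ ω, S ω = A (Z ω) := by intro ω; simp [hS, hA]
  -- membership in L2
  have hEXZ : MemLp (fun ω => EX (Z ω)) 2 μ := EX.comp_memLp' hZ
  have hEYZ : MemLp (fun ω => EY (Z ω)) 2 μ := EY.comp_memLp' hZ
  have hRX : MemLp (fun ω => X ω - EX (Z ω)) 2 μ := hX.sub hEXZ
  have hRY : MemLp (fun ω => Y ω - EY (Z ω)) 2 μ := hY.sub hEYZ
  have hRm : MemLp R 2 μ := hRY.sub (H.comp_memLp' hRX)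
  have hSm : MemLp S 2 μ := hEYZ.sub (H.comp_memLp' hEXZ)
  -- pointwise decomposition
  have hdecomp : ∀ ω, Yγ ω - H (Xγ ω) = R ω + c • S ω := by
    intro ω
    rw [hYγ, hXγ, map_add, ContinuousLinearMap.map_smul]
    simp only [hR, hS, H.map_sub]
    module
  -- expand norm squared
  have hexp : ∀ ω, ‖Yγ ω - H (Xγ ω)‖ ^ 2 =
      ‖R ω‖ ^ 2 + (2 * c) * ⟪R ω, S ω⟫ + γ * ‖S ω‖ ^ 2 := by
    intro ω
    rw [hdecomp ω, norm_add_sq_real, real_inner_smul_right, norm_smul]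
    have : ‖c‖ = c := by rw [hc, Real.norm_eq_abs, abs_of_nonneg (Real.sqrt_nonneg _)]
    rw [this, mul_pow]
    have : c ^ 2 = γ := by rw [hc, Real.sq_sqrt hγ]
    rw [this]; ring
  -- cross term vanishes
  have hcross : ∫ ω, ⟪R ω, S ω⟫ ∂μ = 0 := by
    have h1 : ∀ ω, ⟪R ω, S ω⟫ =
        ⟪Y ω - EY (Z ω), A (Z ω)⟫ -
          ⟪X ω - EX (Z ω), ((ContinuousLinearMap.adjoint H).comp A) (Z ω)⟫ := by
      intro ω
      simp only [hR, hSA ω, ContinuousLinearMap.coe_comp', Function.comp_apply]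
      rw [inner_sub_left, ContinuousLinearMap.adjoint_inner_right]
    calc ∫ ω, ⟪R ω, S ω⟫ ∂μ
        = ∫ ω, (⟪Y ω - EY (Z ω), A (Z ω)⟫ -
            ⟪X ω - EX (Z ω), ((ContinuousLinearMap.adjoint H).comp A) (Z ω)⟫) ∂μ := by
          exact integral_congr_ae (Filter.Eventually.of_forall h1)
      _ = (∫ ω, ⟪Y ω - EY (Z ω), A (Z ω)⟫ ∂μ) -
            ∫ ω, ⟪X ω - EX (Z ω), ((ContinuousLinearMap.adjoint H).comp A) (Z ω)⟫ ∂μ := by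
          exact integral_sub (integrable_inner_of_memL2 hRY (A.comp_memLp' hZ))
            (integrable_inner_of_memL2 hRX
              (((ContinuousLinearMap.adjoint H).comp A).comp_memLp' hZ))
      _ = 0 := by rw [hoY A, hoX ((ContinuousLinearMap.adjoint H).comp A)]; ring
  -- combine
  calc ∫ ω, ‖Yγ ω - H (Xγ ω)‖ ^ 2 ∂μ
      = ∫ ω, (‖R ω‖ ^ 2 + (2 * c) * ⟪R ω, S ω⟫ + γ * ‖S ω‖ ^ 2) ∂μ :=
        integral_congr_ae (Filter.Eventually.of_forall hexp)
    _ = (∫ ω, ‖R ω‖ ^ 2 ∂μ) + (2 * c) * (∫ ω, ⟪R ω, S ω⟫ ∂μ) +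
          γ * ∫ ω, ‖S ω‖ ^ 2 ∂μ := by
        have hI1 : Integrable (fun ω => ‖R ω‖ ^ 2) μ := integrable_norm_sq_of_memL2 hRm
        have hI2 : Integrable (fun ω => 2 * c * ⟪R ω, S ω⟫) μ :=
          (integrable_inner_of_memL2 hRm hSm).const_mul _
        have hI3 : Integrable (fun ω => γ * ‖S ω‖ ^ 2) μ :=
          (integrable_norm_sq_of_memL2 hSm).const_mul _
        have hI12 : Integrable (fun ω => ‖R ω‖ ^ 2 + 2 * c * ⟪R ω, S ω⟫) μ := hI1.add hI2
        rw [integral_add hI12 hI3, integral_add hI1 hI2, integral_const_mul, integral_const_mul]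
    _ = _ := by rw [hcross]; ring
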